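/- arXiv:2302.05052 — 2 statements merged into one kernel-verified Lean document; each statement's English description precedes it below -/
import Mathlib

section
/- Let πz, πr ∈ (0,1) and πẑ ∈ [0,1] be real numbers with πẑ ≠ πz. Then there exist two tuples (p00, p01, p10, p11) and (p00', p01', p10', p11') of nonnegative reals, each satisfying the three marginal constraints (p00+p01+p10+p11 = 1, p10+p11 = πz, p01+p11 = πr), such that (1−πẑ)·p01/(1−πz) + πẑ·p11/πz ≠ (1−πẑ)·p01'/(1−πz) + πẑ·p11'/πz. (Non-identification of the potential-outcome probability in Deconfounder, Example 1.) -/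
/-- Non-identification of the potential-outcome probability in Deconfounder (Example 1):
given `πz, πr ∈ (0,1)`, `πhat ∈ [0,1]` with `πhat ≠ πz`, there are two nonnegative tuples
satisfying the three marginal constraints whose g-formula values differ. -/
theorem deconfounder_non_identification
    (πz πr πhat : ℝ) (hz : πz ∈ Set.Ioo (0 : ℝ) 1) (hr : πr ∈ Set.Ioo (0 : ℝ) 1)
    (hhat : πhat ∈ Set.Icc (0 : ℝ) 1) (hne : πhat ≠ πz) :
    ∃ p00 p01 p10 p11 p00' p01' p10' p11' : ℝ,
      0 ≤ p00 ∧ 0 ≤ p01 ∧ 0 ≤ p10 ∧ 0 ≤ p11 ∧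
      0 ≤ p00' ∧ 0 ≤ p01' ∧ 0 ≤ p10' ∧ 0 ≤ p11' ∧
      p00 + p01 + p10 + p11 = 1 ∧ p10 + p11 = πz ∧ p01 + p11 = πr ∧
      p00' + p01' + p10' + p11' = 1 ∧ p10' + p11' = πz ∧ p01' + p11' = πr ∧
      (1 - πhat) * p01 / (1 - πz) + πhat * p11 / πz ≠
        (1 - πhat) * p01' / (1 - πz) + πhat * p11' / πz := by
  obtain ⟨hz0, hz1⟩ := hz
  obtain ⟨hr0, hr1⟩ := hr
  set a : ℝ := max 0 (πz + πr - 1) with ha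
  set b : ℝ := min πz πr with hb
  have hab : a < b := by
    apply max_lt (lt_min hz0 hr0)
    apply lt_min <;> linarith
  have ha0 : 0 ≤ a := le_max_left _ _
  have ha1 : πz + πr - 1 ≤ a := le_max_right _ _
  have hbz : b ≤ πz := min_le_left _ _
  have hbr : b ≤ πr := min_le_right _ _
  refine ⟨1 - πz - πr + a, πr - a, πz - a, a, 1 - πz - πr + b, πr - b, πz - b, b,
    by linarith, by linarith, by linarith, by linarith, by linarith, by linarith,
    by linarith, by linarith, by ring, by ring, by ring, by ring, by ring, by ring, ?_⟩
  intro heq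
  have h1 : (1 : ℝ) - πz ≠ 0 := by linarith
  have h2 : πz ≠ 0 := ne_of_gt hz0
  field_simp at heq
  have key : (b - a) * (πhat - πz) = 0 := by nlinarith [heq]
  rcases mul_eq_zero.mp key with h | h
  · linarith
  · exact hne (by linarith)
end

section
/- (Lemma 1.) Let πz ∈ (0,1), let q0, q1 ∈ ℝ with q1 ≠ q0, and let r0, r1 ∈ ℝ. Then there exists a unique tuple (p00, p01, p10, p11) ∈ ℝ⁴ satisfying the four linear equations: (i) p00 + p01 + p10 + p11 = 1; (ii) p10 + p11 = πz; (iii) p01·(1−q1)/(1−πz) + p11·q1/πz = r1; (iv) p01·(1−q0)/(1−πz) + p11·q0/πz = r0. Consequently, for any πẑ ∈ ℝ, the g-formula value (1−πẑ)·p01/(1−πz) + πẑ·p11/πz is uniquely determined by (πz, q0, q1, r0, r1). -/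
/-- Lemma 1: with a proxy variable satisfying `q1 ≠ q0`, the four linear equations have a
unique solution `(p00, p01, p10, p11)`, and consequently, for any prior `πhat`, the
g-formula value `(1-πhat)·p01/(1-πz) + πhat·p11/πz` is uniquely determined by
`(πz, q0, q1, r0, r1)`. -/
theorem proxy_identification
    (πz q0 q1 r0 r1 : ℝ) (hz : πz ∈ Set.Ioo (0 : ℝ) 1) (hq : q1 ≠ q0) :
    (∃! p : ℝ × ℝ × ℝ × ℝ,
        p.1 + p.2.1 + p.2.2.1 + p.2.2.2 = 1 ∧
        p.2.2.1 + p.2.2.2 = πz ∧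
        p.2.1 * (1 - q1) / (1 - πz) + p.2.2.2 * q1 / πz = r1 ∧
        p.2.1 * (1 - q0) / (1 - πz) + p.2.2.2 * q0 / πz = r0) ∧
    (∀ πhat p00 p01 p10 p11 p00' p01' p10' p11' : ℝ,
        (p00 + p01 + p10 + p11 = 1 ∧ p10 + p11 = πz ∧
          p01 * (1 - q1) / (1 - πz) + p11 * q1 / πz = r1 ∧
          p01 * (1 - q0) / (1 - πz) + p11 * q0 / πz = r0) →
        (p00' + p01' + p10' + p11' = 1 ∧ p10' + p11' = πz ∧
          p01' * (1 - q1) / (1 - πz) + p11' * q1 / πz = r1 ∧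
          p01' * (1 - q0) / (1 - πz) + p11' * q0 / πz = r0) →
        (1 - πhat) * p01 / (1 - πz) + πhat * p11 / πz =
          (1 - πhat) * p01' / (1 - πz) + πhat * p11' / πz) := by
  obtain ⟨hz0, hz1⟩ := hz
  have h0 : πz ≠ 0 := ne_of_gt hz0
  have h1 : (1:ℝ) - πz ≠ 0 := sub_ne_zero.mpr (ne_of_gt hz1)
  have hqd : q1 - q0 ≠ 0 := sub_ne_zero.mpr hq
  have hqd' : q0 - q1 ≠ 0 := sub_ne_zero.mpr (Ne.symm hq)
  have key : ∀ a b a' b' : ℝ,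
      (a * (1 - q1) / (1 - πz) + b * q1 / πz = r1) →
      (a * (1 - q0) / (1 - πz) + b * q0 / πz = r0) →
      (a' * (1 - q1) / (1 - πz) + b' * q1 / πz = r1) →
      (a' * (1 - q0) / (1 - πz) + b' * q0 / πz = r0) →
      a = a' ∧ b = b' := by
    intro a b a' b' e1 e2 e3 e4
    field_simp at e1 e2 e3 e4
    constructor
    · apply mul_left_cancel₀ (mul_ne_zero hqd' h0)
      linear_combination q0 * e1 - q1 * e2 - q0 * e3 + q1 * e4
    · apply mul_left_cancel₀ (mul_ne_zero hqd h1)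
      linear_combination (1 - q0) * e1 - (1 - q1) * e2 - (1 - q0) * e3 + (1 - q1) * e4
  set c01 : ℝ := (q0 * r1 - q1 * r0) * (1 - πz) / (q0 - q1) with hc01
  set c11 : ℝ := πz * ((1 - q0) * r1 - (1 - q1) * r0) / (q1 - q0) with hc11
  have he1 : c01 * (1 - q1) / (1 - πz) + c11 * q1 / πz = r1 := by
    rw [hc01, hc11]; field_simp; ring
  have he2 : c01 * (1 - q0) / (1 - πz) + c11 * q0 / πz = r0 := by
    rw [hc01, hc11]; field_simp; ring
  constructor
  · refine ⟨(1 - c01 - πz, c01, πz - c11, c11), ⟨by ring, by ring, he1, he2⟩, ?_⟩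
    rintro ⟨a00, a01, a10, a11⟩ ⟨g1, g2, g3, g4⟩
    obtain ⟨ha, hb⟩ := key a01 a11 c01 c11 g3 g4 he1 he2
    simp only at g1 g2 ha hb ⊢
    subst ha hb
    have : a10 = πz - c11 := by linarith [g2]
    subst this
    have : a00 = 1 - c01 - πz := by linarith [g1]
    subst this
    rfl
  · rintro πhat p00 p01 p10 p11 p00' p01' p10' p11' ⟨_, _, g3, g4⟩ ⟨_, _, g3', g4'⟩
    obtain ⟨ha, hb⟩ := key p01 p11 p01' p11' g3 g4 g3' g4'
    rw [ha, hb]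
end
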